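/- Let ℓ₁,…,ℓ_d be a sequence of positive integers, all of which are odd except for ℓ_k, which is even. Then for any two self-complementary ideals I and J of [ℓ₁]×⋯×[ℓ_d], one has 4·|I ∩ J| ≥ ℓ₁⋯ℓ_d + ℓ_k. -/

import Mathlib

open Finset

/-- An ideal (downward-closed subset, possibly empty) of a finite poset. -/
def IsIdeal {P : Type*} [PartialOrder P] (I : Finset P) : Prop :=
  ∀ a ∈ I, ∀ b, b ≤ a → b ∈ I

/-- A self-complementary ideal with respect to an involution `φ`. -/
def IsSCIdeal {P : Type*} [PartialOrder P] (φ : P → P) (I : Finset P) : Prop :=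
  IsIdeal I ∧ ∀ a, a ∈ I ↔ φ a ∉ I

/-- The flip graph on self-complementary ideals: two ideals are adjacent when they
differ in exactly one element each way. -/
def FlipGraph {P : Type*} [PartialOrder P] [DecidableEq P] (φ : P → P) :
    SimpleGraph {I : Finset P // IsSCIdeal φ I} where
  Adj I J := I ≠ J ∧ (I.1 \ J.1).card = 1 ∧ (J.1 \ I.1).card = 1
  symm := ⟨fun _ _ h => ⟨h.1.symm, h.2.2, h.2.1⟩⟩
  loopless := ⟨fun _ h => h.1 rfl⟩

/-- Eccentricity of a vertex: its maximum distance to any vertex. -/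
noncomputable def eccentricity {V : Type*} (G : SimpleGraph V) (v : V) : ℕ :=
  ⨆ u, G.dist v u

/-- Diameter of a graph: the maximum eccentricity. -/
noncomputable def graphDiam {V : Type*} (G : SimpleGraph V) : ℕ :=
  ⨆ v, eccentricity G v

/-- Radius of a graph: the minimum eccentricity. -/
noncomputable def graphRadius {V : Type*} (G : SimpleGraph V) : ℕ :=
  ⨅ v, eccentricity G v

/-- The order-reversing involution `aᵢ ↦ ℓᵢ + 1 - aᵢ` on a product of chains
(0-indexed via `Fin.rev`). -/
def chainRev {d : ℕ} (ℓ : Fin d → ℕ) (a : ∀ i, Fin (ℓ i)) : ∀ i, Fin (ℓ i) :=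
  fun i => (a i).rev

open scoped FinsetFamily

lemma sym_diff_bound (M a x y : ℕ) (hK : 2*(a+x) < M) (hL : 2*(a+y) < M)
    (hday : (a+x)*(a+y) ≤ M*a) : 2*(x+y)+1 ≤ M := by
  zify at *
  have e1 : (1:ℤ) ≤ M - 2*(a+x) := by omega
  have e2 : (1:ℤ) ≤ M - 2*(a+y) := by omega
  have e3 : (1:ℤ)*1 ≤ (M - 2*(a+x)) * (M - 2*(a+y)) :=
    mul_le_mul e1 e2 (by norm_num) (by omega)
  have hM : (0:ℤ) < M := by omega
  nlinarith [e3, hday, hM]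

lemma pairing_bound {α : Type*} [DecidableEq α] (W K : Finset α) (ψ : α → α)
    (hinv : ∀ a, ψ (ψ a) = a) (hKW : K ⊆ W) (hψW : ∀ a ∈ K, ψ a ∈ W)
    (hdis : ∀ a ∈ K, ψ a ∉ K) (c : α) (hcW : c ∈ W) (hfix : ψ c = c) :
    2 * K.card < W.card := by
  have hcK : c ∉ K := fun hc => hdis c hc (by rwa [hfix])
  have hinj : Set.InjOn ψ K := fun a _ b _ h => by rw [← hinv a, h, hinv]
  have himg : K.image ψ ⊆ W := by
    intro x hx; obtain ⟨b, hb, rfl⟩ := mem_image.1 hx; exact hψW b hb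
  have hd : Disjoint K (K.image ψ) := by
    rw [Finset.disjoint_right]
    intro x hx hxK
    obtain ⟨b, hb, rfl⟩ := mem_image.1 hx
    exact hdis b hb hxK
  have hsub : K ∪ K.image ψ ⊆ W.erase c := by
    intro x hx
    rw [mem_erase]
    refine ⟨?_, (union_subset hKW himg) hx⟩
    rintro rfl
    rcases mem_union.1 hx with h | h
    · exact hcK h
    · obtain ⟨b, hb, hbc⟩ := mem_image.1 h
      have : b = x := by rw [← hinv b, hbc, hfix]
      exact hcK (this ▸ hb)
  have h1 : (K ∪ K.image ψ).card = 2 * K.card := by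
    rw [card_union_of_disjoint hd, Finset.card_image_of_injOn hinj]; ring
  have h2 := card_le_card hsub
  have h3 : (W.erase c).card = W.card - 1 := card_erase_of_mem hcW
  have h4 : 1 ≤ W.card := card_pos.2 ⟨c, hcW⟩
  omega

/-- midpoint of `Fin n`. -/
def midpt (n : ℕ) (h : 0 < n) : Fin n := ⟨(n-1)/2, by omega⟩

lemma midpt_rev {n : ℕ} (h : 0 < n) (hodd : Odd n) : (midpt n h).rev = midpt n h := by
  obtain ⟨m, rfl⟩ := hodd
  apply Fin.ext
  simp [Fin.val_rev, midpt]
  omega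

set_option maxHeartbeats 1000000 in
lemma slice_bound (d : ℕ) (ℓ : Fin d → ℕ) (hpos : ∀ i, 0 < ℓ i) (k : Fin d)
    (hodd : ∀ i, i ≠ k → Odd (ℓ i)) (I J : Finset (∀ i, Fin (ℓ i)))
    (hI : IsSCIdeal (chainRev ℓ) I) (hJ : IsSCIdeal (chainRev ℓ) J) (t : Fin (ℓ k)) :
    2 * ((((I \ J) ∪ (J \ I)).filter (fun a => a k = t)).card) + 1
      ≤ (univ.filter (fun a : ∀ i, Fin (ℓ i) => a k = t)).card := by
  classical
  set W : Finset (∀ i, Fin (ℓ i)) := univ.filter (fun a => a k = t) with hW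
  have hWmem : ∀ a : ∀ i, Fin (ℓ i), a ∈ W ↔ a k = t := by
    intro a; simp [hW]
  set ψ : (∀ i, Fin (ℓ i)) → (∀ i, Fin (ℓ i)) :=
    fun a i => if i = k then a i else (a i).rev with hψ
  have hψk : ∀ a, ψ a k = a k := by intro a; simp [hψ]
  have hψinv : ∀ a, ψ (ψ a) = a := by
    intro a; funext i
    by_cases h : i = k <;> simp [hψ, h, Fin.rev_rev]
  have hψW : ∀ a, a ∈ W → ψ a ∈ W := by
    intro a ha; rw [hWmem] at ha ⊢; rw [hψk, ha]
  set c : ∀ i, Fin (ℓ i) := Function.update (fun i => midpt (ℓ i) (hpos i)) k t with hc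
  have hcW : c ∈ W := by rw [hWmem, hc]; simp
  have hcfix : ψ c = c := by
    funext i
    by_cases h : i = k
    · simp [hψ, h]
    · have hci : c i = midpt (ℓ i) (hpos i) := by
        rw [hc]; exact Function.update_of_ne h _ _
      simp only [hψ, if_neg h, hci, midpt_rev (hpos i) (hodd i h)]
  have hIc : ∀ a, a ∉ I → chainRev ℓ a ∈ I := by
    intro a ha; by_contra h'; exact ha ((hI.2 a).mpr h')
  have hJc : ∀ a, a ∉ J → chainRev ℓ a ∈ J := by
    intro a ha; by_contra h'; exact ha ((hJ.2 a).mpr h')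
  rcases le_total t t.rev with h | h
  -- Case A : lower slice, use complements of I, J in the slice
  · set K : Finset (∀ i, Fin (ℓ i)) := W \ I with hK
    set L : Finset (∀ i, Fin (ℓ i)) := W \ J with hL
    have hKmem : ∀ a, a ∈ K ↔ a k = t ∧ a ∉ I := by
      intro a; rw [hK, mem_sdiff, hWmem]
    have hLmem : ∀ a, a ∈ L ↔ a k = t ∧ a ∉ J := by
      intro a; rw [hL, mem_sdiff, hWmem]
    have keyI : ∀ a ∈ K, ψ a ∈ I := by
      intro a haK
      rw [hKmem] at haK
      refine hI.1 _ (hIc a haK.2) _ ?_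
      intro i
      by_cases hik : i = k
      · subst hik
        show ψ a i ≤ (a i).rev
        rw [hψk, haK.1]; exact h
      · show ψ a i ≤ (a i).rev
        simp [hψ, if_neg hik]
    have keyJ : ∀ a ∈ L, ψ a ∈ J := by
      intro a haL
      rw [hLmem] at haL
      refine hJ.1 _ (hJc a haL.2) _ ?_
      intro i
      by_cases hik : i = k
      · subst hik; show ψ a i ≤ (a i).rev; rw [hψk, haL.1]; exact h
      · show ψ a i ≤ (a i).rev; simp [hψ, if_neg hik]
    have hKb : 2 * K.card < W.card := by
      refine pairing_bound W K ψ hψinv ?_ ?_ ?_ c hcW hcfix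
      · intro a ha; rw [hWmem]; exact ((hKmem a).1 ha).1
      · intro a ha; exact hψW a (by rw [hWmem]; exact ((hKmem a).1 ha).1)
      · intro a ha hmem
        exact ((hKmem _).1 hmem).2 (keyI a ha)
    have hLb : 2 * L.card < W.card := by
      refine pairing_bound W L ψ hψinv ?_ ?_ ?_ c hcW hcfix
      · intro a ha; rw [hWmem]; exact ((hLmem a).1 ha).1
      · intro a ha; exact hψW a (by rw [hWmem]; exact ((hLmem a).1 ha).1)
      · intro a ha hmem
        exact ((hLmem _).1 hmem).2 (keyJ a ha)
    have hsups : K ⊻ L ⊆ K ∩ L := by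
      intro x hx
      obtain ⟨a, ha, b, hb, rfl⟩ := mem_sups.1 hx
      rw [hKmem] at ha
      rw [hLmem] at hb
      have habt : (a ⊔ b) k = t := by
        show a k ⊔ b k = t
        rw [ha.1, hb.1, sup_idem]
      have habI : a ⊔ b ∉ I := fun hmem => ha.2 (hI.1 _ hmem a le_sup_left)
      have habJ : a ⊔ b ∉ J := fun hmem => hb.2 (hJ.1 _ hmem b le_sup_right)
      exact mem_inter.2 ⟨(hKmem _).2 ⟨habt, habI⟩, (hLmem _).2 ⟨habt, habJ⟩⟩
    have hinfs : K ⊼ L ⊆ W := by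
      intro x hx
      obtain ⟨a, ha, b, hb, rfl⟩ := mem_infs.1 hx
      rw [hKmem] at ha
      rw [hLmem] at hb
      rw [hWmem]
      show a k ⊓ b k = t
      rw [ha.1, hb.1, inf_idem]
    have hday : K.card * L.card ≤ W.card * (K ∩ L).card :=
      (Finset.le_card_infs_mul_card_sups K L).trans
        (Nat.mul_le_mul (card_le_card hinfs) (card_le_card hsups))
    have hseteq : ((I \ J) ∪ (J \ I)).filter (fun a => a k = t) = (K \ L) ∪ (L \ K) := by
      ext a
      simp only [mem_filter, mem_union, mem_sdiff, hKmem, hLmem]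
      tauto
    have h1 : (K ∩ L).card + (K \ L).card = K.card := card_inter_add_card_sdiff K L
    have h2 : (K ∩ L).card + (L \ K).card = L.card := by
      rw [inter_comm]; exact card_inter_add_card_sdiff L K
    have hmain := sym_diff_bound W.card (K ∩ L).card (K \ L).card (L \ K).card
      (by rw [h1]; exact hKb) (by rw [h2]; exact hLb) (by rw [h1, h2]; exact hday)
    rw [hseteq, card_union_of_disjoint disjoint_sdiff_sdiff]
    exact hmain
  -- Case B : upper slice, use intersections with I, J
  · set K : Finset (∀ i, Fin (ℓ i)) := W ∩ I with hK
    set L : Finset (∀ i, Fin (ℓ i)) := W ∩ J with hL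
    have hKmem : ∀ a, a ∈ K ↔ a k = t ∧ a ∈ I := by
      intro a; rw [hK, mem_inter, hWmem]
    have hLmem : ∀ a, a ∈ L ↔ a k = t ∧ a ∈ J := by
      intro a; rw [hL, mem_inter, hWmem]
    have keyI : ∀ a ∈ K, ψ a ∉ I := by
      intro a haK hmem
      rw [hKmem] at haK
      refine (hI.2 a).1 haK.2 (hI.1 _ hmem _ ?_)
      intro i
      by_cases hik : i = k
      · subst hik
        show (a i).rev ≤ ψ a i
        rw [hψk, haK.1]; exact h
      · show (a i).rev ≤ ψ a i
        simp [hψ, if_neg hik]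
    have keyJ : ∀ a ∈ L, ψ a ∉ J := by
      intro a haL hmem
      rw [hLmem] at haL
      refine (hJ.2 a).1 haL.2 (hJ.1 _ hmem _ ?_)
      intro i
      by_cases hik : i = k
      · subst hik; show (a i).rev ≤ ψ a i; rw [hψk, haL.1]; exact h
      · show (a i).rev ≤ ψ a i; simp [hψ, if_neg hik]
    have hKb : 2 * K.card < W.card := by
      refine pairing_bound W K ψ hψinv ?_ ?_ ?_ c hcW hcfix
      · intro a ha; rw [hWmem]; exact ((hKmem a).1 ha).1
      · intro a ha; exact hψW a (by rw [hWmem]; exact ((hKmem a).1 ha).1)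
      · intro a ha hmem
        exact keyI a ha ((hKmem _).1 hmem).2
    have hLb : 2 * L.card < W.card := by
      refine pairing_bound W L ψ hψinv ?_ ?_ ?_ c hcW hcfix
      · intro a ha; rw [hWmem]; exact ((hLmem a).1 ha).1
      · intro a ha; exact hψW a (by rw [hWmem]; exact ((hLmem a).1 ha).1)
      · intro a ha hmem
        exact keyJ a ha ((hLmem _).1 hmem).2
    have hinfs : K ⊼ L ⊆ K ∩ L := by
      intro x hx
      obtain ⟨a, ha, b, hb, rfl⟩ := mem_infs.1 hx
      rw [hKmem] at ha
      rw [hLmem] at hb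
      have habt : (a ⊓ b) k = t := by
        show a k ⊓ b k = t
        rw [ha.1, hb.1, inf_idem]
      have habI : a ⊓ b ∈ I := hI.1 a ha.2 _ inf_le_left
      have habJ : a ⊓ b ∈ J := hJ.1 b hb.2 _ inf_le_right
      exact mem_inter.2 ⟨(hKmem _).2 ⟨habt, habI⟩, (hLmem _).2 ⟨habt, habJ⟩⟩
    have hsups : K ⊻ L ⊆ W := by
      intro x hx
      obtain ⟨a, ha, b, hb, rfl⟩ := mem_sups.1 hx
      rw [hKmem] at ha
      rw [hLmem] at hb
      rw [hWmem]
      show a k ⊔ b k = t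
      rw [ha.1, hb.1, sup_idem]
    have hday : K.card * L.card ≤ W.card * (K ∩ L).card := by
      refine (Finset.le_card_infs_mul_card_sups K L).trans ?_
      calc (K ⊼ L).card * (K ⊻ L).card ≤ (K ∩ L).card * W.card :=
            Nat.mul_le_mul (card_le_card hinfs) (card_le_card hsups)
        _ = W.card * (K ∩ L).card := Nat.mul_comm _ _
    have hseteq : ((I \ J) ∪ (J \ I)).filter (fun a => a k = t) = (K \ L) ∪ (L \ K) := by
      ext a
      simp only [mem_filter, mem_union, mem_sdiff, hKmem, hLmem]
      tauto
    have h1 : (K ∩ L).card + (K \ L).card = K.card := card_inter_add_card_sdiff K L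
    have h2 : (K ∩ L).card + (L \ K).card = L.card := by
      rw [inter_comm]; exact card_inter_add_card_sdiff L K
    have hmain := sym_diff_bound W.card (K ∩ L).card (K \ L).card (L \ K).card
      (by rw [h1]; exact hKb) (by rw [h2]; exact hLb) (by rw [h1, h2]; exact hday)
    rw [hseteq, card_union_of_disjoint disjoint_sdiff_sdiff]
    exact hmain

/-- If all `ℓᵢ` are odd except `ℓ_k` which is even, any two self-complementary ideals
`I`, `J` of `[ℓ₁] × ⋯ × [ℓ_d]` satisfy `4·|I ∩ J| ≥ ℓ₁⋯ℓ_d + ℓ_k`. -/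
theorem scIdeal_intersection_lower_bound_one_even (d : ℕ) (ℓ : Fin d → ℕ)
    (hpos : ∀ i, 0 < ℓ i) (k : Fin d) (hk : Even (ℓ k)) (hodd : ∀ i, i ≠ k → Odd (ℓ i))
    (I J : Finset (∀ i, Fin (ℓ i)))
    (hI : IsSCIdeal (chainRev ℓ) I) (hJ : IsSCIdeal (chainRev ℓ) J) :
    (∏ i, ℓ i) + ℓ k ≤ 4 * (I ∩ J).card := by
  classical
  have hrevrev : ∀ a : ∀ i, Fin (ℓ i), chainRev ℓ (chainRev ℓ a) = a := by
    intro a; funext i; exact Fin.rev_rev _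
  have hinj : Function.Injective (chainRev ℓ) := fun a b hab => by
    rw [← hrevrev a, hab, hrevrev]
  have hcompl : ∀ X : Finset (∀ i, Fin (ℓ i)), IsSCIdeal (chainRev ℓ) X →
      X.card + X.card = (univ : Finset (∀ i, Fin (ℓ i))).card := by
    intro X hX
    have him : univ \ X = X.image (chainRev ℓ) := by
      ext b
      simp only [mem_sdiff, mem_univ, true_and, mem_image]
      constructor
      · intro hb
        refine ⟨chainRev ℓ b, ?_, hrevrev b⟩
        by_contra h'
        exact hb ((hX.2 b).mpr h')
      · rintro ⟨a, haX, rfl⟩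
        exact (hX.2 a).1 haX
    have h1 : (univ \ X).card = X.card := by
      rw [him, card_image_of_injective _ hinj]
    have h2 : (univ \ X).card = univ.card - X.card := card_sdiff_of_subset (subset_univ X)
    have h3 := card_le_card (subset_univ X)
    omega
  have hIcard := hcompl I hI
  have hJcard := hcompl J hJ
  set S := (I \ J) ∪ (J \ I) with hS
  have hfib : ∀ s : Finset (∀ i, Fin (ℓ i)),
      s.card = ∑ t : Fin (ℓ k), (s.filter fun a => a k = t).card := fun s =>
    card_eq_sum_card_fiberwise (fun x _ => mem_univ _)
  have hsum : ∑ t : Fin (ℓ k), (2 * ((S.filter fun a => a k = t)).card + 1)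
      ≤ ∑ t : Fin (ℓ k), (univ.filter fun a : ∀ i, Fin (ℓ i) => a k = t).card :=
    Finset.sum_le_sum fun t _ => slice_bound d ℓ hpos k hodd I J hI hJ t
  have hLsum : ∑ t : Fin (ℓ k), (2 * ((S.filter fun a => a k = t)).card + 1)
      = 2 * S.card + ℓ k := by
    rw [Finset.sum_add_distrib, Finset.sum_const, ← Finset.mul_sum, ← hfib S,
      Finset.card_univ, Fintype.card_fin, smul_eq_mul, mul_one]
  have hN : (univ : Finset (∀ i, Fin (ℓ i))).card = ∏ i, ℓ i := by
    rw [Finset.card_univ]; simp [Fintype.card_pi]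
  have hSN : 2 * S.card + ℓ k ≤ (univ : Finset (∀ i, Fin (ℓ i))).card := by
    rw [← hLsum]
    exact hsum.trans_eq (hfib univ).symm
  have hScard : S.card = (I \ J).card + (J \ I).card :=
    card_union_of_disjoint disjoint_sdiff_sdiff
  have e1 : (I ∩ J).card + (I \ J).card = I.card := card_inter_add_card_sdiff I J
  have e2 : (I ∩ J).card + (J \ I).card = J.card := by
    rw [inter_comm]; exact card_inter_add_card_sdiff J I
  clear hfib hsum hLsum hcompl hrevrev hinj hS
  clear_value S
  omega
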